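/- Identification of the Switching Effect: fix an exposure level h̄ ∈ H with P(D=1, h=h̄) > 0 and P(D=0, h=h̄) > 0, and define the average switching effect τ_switch(h̄) := E[Y_1(1,h̄) − Y_1(0,h̄) | D=1, h=h̄]. If No Anticipation holds and the Switching-Effect Parallel Trends condition holds at h̄, namely E[Y_1(0,h̄) − Y_0(0,0) | D=1, h=h̄] = E[Y_1(0,h̄) − Y_0(0,0) | D=0, h=h̄], then τ_switch(h̄) = E[Y_1^obs − Y_0^obs | D=1, h=h̄] − E[Y_1^obs − Y_0^obs | D=0, h=h̄]. -/

import Mathlib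

open MeasureTheory

/-- Conditional mean of `X` given the event `A`: `E[X | A] = (1/P(A)) ∫_A X dP`. -/
noncomputable def condMean {Ω : Type*} [MeasurableSpace Ω] (P : Measure Ω)
    (A : Set Ω) (X : Ω → ℝ) : ℝ :=
  (P A).toReal⁻¹ * ∫ ω in A, X ω ∂P

/-- Set-integral congruence on an arbitrary (possibly non-measurable) set,
for a.e.-strongly-measurable functions. -/
lemma setIntegral_congr_of_aestronglyMeasurable
    {Ω : Type*} [MeasurableSpace Ω] (P : Measure Ω) {f g : Ω → ℝ}
    (hf : AEStronglyMeasurable f P) (hg : AEStronglyMeasurable g P)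
    (s : Set Ω) (hfg : ∀ ω ∈ s, f ω = g ω) :
    ∫ ω in s, f ω ∂P = ∫ ω in s, g ω ∂P := by
  set f' := hf.mk f
  set g' := hg.mk g
  have hmono : ae (P.restrict s) ≤ ae P := ae_mono Measure.restrict_le_self
  have hff' : f =ᵐ[P.restrict s] f' := hf.ae_eq_mk.filter_mono hmono
  have hgg' : g =ᵐ[P.restrict s] g' := hg.ae_eq_mk.filter_mono hmono
  have hNull : P ({ω | f ω ≠ f' ω} ∪ {ω | g ω ≠ g' ω}) = 0 := by
    apply measure_union_null
    · exact ae_iff.mp hf.ae_eq_mk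
    · exact ae_iff.mp hg.ae_eq_mk
  have hmeas : MeasurableSet {ω | f' ω ≠ g' ω} :=
    (measurableSet_eq_fun hf.stronglyMeasurable_mk.measurable
      hg.stronglyMeasurable_mk.measurable).compl
  have hf'g' : f' =ᵐ[P.restrict s] g' := by
    rw [Filter.EventuallyEq, ae_iff]
    have : {ω | ¬ f' ω = g' ω} ∩ s ⊆ {ω | f ω ≠ f' ω} ∪ {ω | g ω ≠ g' ω} := by
      intro ω ⟨hω, hωs⟩
      simp only [Set.mem_setOf_eq] at hω
      by_contra hc
      simp only [Set.mem_union, Set.mem_setOf_eq, not_or, not_not] at hc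
      exact hω (by rw [← hc.1, ← hc.2]; exact hfg ω hωs)
    rw [Measure.restrict_apply hmeas]
    exact measure_mono_null this hNull
  exact integral_congr_ae (hff'.trans (hf'g'.trans hgg'.symm))

/-- Identification of the switching effect at exposure level `h̄` under
No Anticipation and Switching-Effect Parallel Trends. -/
theorem switching_effect_identification
    {Ω : Type*} [MeasurableSpace Ω] (P : Measure Ω) [IsProbabilityMeasure P]
    {H : Type*} [Zero H]
    (D : Ω → Fin 2) (h : Ω → H)
    (Y : Fin 2 → Fin 2 → H → Ω → ℝ)
    (hbar : H)
    (hD1 : 0 < P {ω | D ω = 1 ∧ h ω = hbar})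
    (hD0 : 0 < P {ω | D ω = 0 ∧ h ω = hbar})
    -- integrability of all random variables appearing in the stated expectations
    (hIntArm : ∀ (t d : Fin 2) (e : H), Integrable (Y t d e) P)
    (hIntObs : ∀ t : Fin 2, Integrable (fun ω => Y t (D ω) (h ω) ω) P)
    -- No Anticipation
    (hNoAnt : ∀ (d : Fin 2) (e : H) (ω : Ω), Y 0 d e ω = Y 0 0 0 ω)
    -- Switching-Effect Parallel Trends at exposure hbar
    (hPT : condMean P {ω | D ω = 1 ∧ h ω = hbar} (fun ω => Y 1 0 hbar ω - Y 0 0 0 ω)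
         = condMean P {ω | D ω = 0 ∧ h ω = hbar} (fun ω => Y 1 0 hbar ω - Y 0 0 0 ω)) :
    condMean P {ω | D ω = 1 ∧ h ω = hbar} (fun ω => Y 1 1 hbar ω - Y 1 0 hbar ω)
    = condMean P {ω | D ω = 1 ∧ h ω = hbar}
        (fun ω => Y 1 (D ω) (h ω) ω - Y 0 (D ω) (h ω) ω)
      - condMean P {ω | D ω = 0 ∧ h ω = hbar}
        (fun ω => Y 1 (D ω) (h ω) ω - Y 0 (D ω) (h ω) ω) := by
  set A := {ω | D ω = 1 ∧ h ω = hbar} with hA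
  set B := {ω | D ω = 0 ∧ h ω = hbar} with hB
  have hObsMeas : AEStronglyMeasurable
      (fun ω => Y 1 (D ω) (h ω) ω - Y 0 (D ω) (h ω) ω) P :=
    ((hIntObs 1).sub (hIntObs 0)).aestronglyMeasurable
  -- On A the observed difference equals Y 1 1 hbar - Y 0 0 0
  have hAobs : ∫ ω in A, (Y 1 (D ω) (h ω) ω - Y 0 (D ω) (h ω) ω) ∂P
      = ∫ ω in A, (Y 1 1 hbar ω - Y 0 0 0 ω) ∂P := by
    apply setIntegral_congr_of_aestronglyMeasurable P hObsMeas
      ((hIntArm 1 1 hbar).sub (hIntArm 0 0 0)).aestronglyMeasurable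
    intro ω ⟨hd, hh⟩
    rw [hd, hh, hNoAnt 1 hbar ω]
    rfl
  -- On B the observed difference equals Y 1 0 hbar - Y 0 0 0
  have hBobs : ∫ ω in B, (Y 1 (D ω) (h ω) ω - Y 0 (D ω) (h ω) ω) ∂P
      = ∫ ω in B, (Y 1 0 hbar ω - Y 0 0 0 ω) ∂P := by
    apply setIntegral_congr_of_aestronglyMeasurable P hObsMeas
      ((hIntArm 1 0 hbar).sub (hIntArm 0 0 0)).aestronglyMeasurable
    intro ω ⟨hd, hh⟩
    rw [hd, hh, hNoAnt 0 hbar ω]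
    rfl
  have e1 : condMean P A (fun ω => Y 1 (D ω) (h ω) ω - Y 0 (D ω) (h ω) ω)
      = condMean P A (fun ω => Y 1 1 hbar ω - Y 0 0 0 ω) := by
    unfold condMean; rw [hAobs]
  have e2 : condMean P B (fun ω => Y 1 (D ω) (h ω) ω - Y 0 (D ω) (h ω) ω)
      = condMean P B (fun ω => Y 1 0 hbar ω - Y 0 0 0 ω) := by
    unfold condMean; rw [hBobs]
  rw [e1, e2, ← hPT]
  unfold condMean
  have i1 : Integrable (fun ω => Y 1 1 hbar ω - Y 0 0 0 ω) (P.restrict A) :=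
    ((hIntArm 1 1 hbar).sub (hIntArm 0 0 0)).restrict
  have i2 : Integrable (fun ω => Y 1 0 hbar ω - Y 0 0 0 ω) (P.restrict A) :=
    ((hIntArm 1 0 hbar).sub (hIntArm 0 0 0)).restrict
  rw [← mul_sub, ← integral_sub i1 i2]
  congr 1
  apply integral_congr_ae
  filter_upwards with ω
  ring
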